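/- arXiv:1205.4576 — 3 statements merged into one kernel-verified Lean document; each statement's English description precedes it below -/
import Mathlib

section
/- Let f be a uniformly random permutation of {0,1}^n and x uniform in {0,1}^n. For any (possibly randomized) oracle algorithm A making at most q queries to f, the probability that A^{f}(f(x)) outputs x is at most (2q+1)/2^n. -/
open Finset
open scoped Classical

private lemma update_swap_eq {D : Type*} [DecidableEq D] (f : Equiv.Perm D) (x y : D) :
    Function.update (⇑((Equiv.swap x y).trans f)) x (((Equiv.swap x y).trans f) y)
      = Function.update (⇑f) y (f x) := by
  funext u
  rcases eq_or_ne u x with rfl | hux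
  · simp [Function.update_apply, Equiv.swap_apply_right]
  · rcases eq_or_ne u y with rfl | huy
    · simp [Function.update_apply, hux, Equiv.swap_apply_right]
    · simp [Function.update_apply, hux, huy, Equiv.swap_apply_of_ne_of_ne hux huy]

/-- One-wayness of a random permutation: let `f` be a uniformly random
permutation of `{0,1}^n` and `x` uniform in `{0,1}^n`.  For any (possibly
randomized, with randomness `ρ` uniform in a finite set `R`) oracle algorithm
`A` making at most `q` queries to `f`, the probability that `A^f (f x) = x` is
at most `(2q + 1) / 2^n`. -/
theorem stmt_7 (n q : ℕ) {R : Type*} [Fintype R] [Nonempty R]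
    (A : R → ((Fin n → Bool) → (Fin n → Bool)) → (Fin n → Bool) → (Fin n → Bool))
    (hq : ∀ (ρ : R) (z : Fin n → Bool) (f : (Fin n → Bool) → (Fin n → Bool)),
      ∃ Q : Finset (Fin n → Bool), Q.card ≤ q ∧
        ∀ g, (∀ u ∈ Q, g u = f u) → A ρ g z = A ρ f z) :
    ((Finset.univ.filter
        (fun p : Equiv.Perm (Fin n → Bool) × (Fin n → Bool) × R =>
          A p.2.2 p.1 (p.1 p.2.1) = p.2.1)).card : ℝ)
      / (Fintype.card (Equiv.Perm (Fin n → Bool) × (Fin n → Bool) × R))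
    ≤ (2 * q + 1) / 2 ^ n := by
  classical
  choose Q hQcard hQ using hq
  set S : Finset (Equiv.Perm (Fin n → Bool) × (Fin n → Bool) × R) :=
    Finset.univ.filter
        (fun p : Equiv.Perm (Fin n → Bool) × (Fin n → Bool) × R =>
          A p.2.2 p.1 (p.1 p.2.1) = p.2.1) with hS
  -- the sample space enlarged with the fresh point `x* = ω.2`
  set Fstar : (Equiv.Perm (Fin n → Bool) × (Fin n → Bool) × R) × (Fin n → Bool) →
      (Fin n → Bool) → (Fin n → Bool) :=
    fun ω => Function.update (⇑ω.1.1) ω.2 (ω.1.1 ω.1.2.1) with hFstar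
  set Er : Finset ((Equiv.Perm (Fin n → Bool) × (Fin n → Bool) × R) × (Fin n → Bool)) :=
    Finset.univ.filter (fun ω => A ω.1.2.2 ω.1.1 (ω.1.1 ω.1.2.1) = ω.1.2.1) with hEr
  set Em : Finset ((Equiv.Perm (Fin n → Bool) × (Fin n → Bool) × R) × (Fin n → Bool)) :=
    Finset.univ.filter (fun ω => A ω.1.2.2 (Fstar ω) (ω.1.1 ω.1.2.1) = ω.1.2.1) with hEm
  set Em2 : Finset ((Equiv.Perm (Fin n → Bool) × (Fin n → Bool) × R) × (Fin n → Bool)) :=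
    Finset.univ.filter (fun ω => A ω.1.2.2 (Fstar ω) (ω.1.1 ω.1.2.1) = ω.2) with hEm2
  set El : Finset ((Equiv.Perm (Fin n → Bool) × (Fin n → Bool) × R) × (Fin n → Bool)) :=
    Finset.univ.filter (fun ω => A ω.1.2.2 ω.1.1 (ω.1.1 ω.1.2.1) = ω.2) with hEl
  set Bad : Finset ((Equiv.Perm (Fin n → Bool) × (Fin n → Bool) × R) × (Fin n → Bool)) :=
    Finset.univ.filter (fun ω => ω.2 ∈ Q ω.1.2.2 (ω.1.1 ω.1.2.1) ω.1.1) with hBad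
  -- (a)
  have ha : Er.card = S.card * 2 ^ n := by
    have hprod : Er = S ×ˢ (Finset.univ : Finset (Fin n → Bool)) := by
      ext ω
      simp [hEr, hS, Finset.mem_product]
    rw [hprod, Finset.card_product, Finset.card_univ]
    simp
  -- (b)
  have hb : Er ⊆ Em ∪ Bad := by
    intro ω hω
    by_cases hmem : ω.2 ∈ Q ω.1.2.2 (ω.1.1 ω.1.2.1) ω.1.1
    · exact Finset.mem_union_right _ (by simp [hBad, hmem])
    · refine Finset.mem_union_left _ ?_
      have hag : A ω.1.2.2 (Fstar ω) (ω.1.1 ω.1.2.1) = A ω.1.2.2 ω.1.1 (ω.1.1 ω.1.2.1) :=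
        hQ _ _ _ _ (fun u hu =>
          Function.update_of_ne (fun h => hmem (by rw [← h]; exact hu)) _ _)
      simp only [hEm, Finset.mem_filter, Finset.mem_univ, true_and]
      rw [hag]
      exact (Finset.mem_filter.mp hω).2
  -- the reprogramming bijection
  set ψ : (Equiv.Perm (Fin n → Bool) × (Fin n → Bool) × R) × (Fin n → Bool) →
      (Equiv.Perm (Fin n → Bool) × (Fin n → Bool) × R) × (Fin n → Bool) :=
    fun ω => (((Equiv.swap ω.1.2.1 ω.2).trans ω.1.1, ω.2, ω.1.2.2), ω.1.2.1) with hψ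
  have hinv : ∀ ω, ψ (ψ ω) = ω := by
    rintro ⟨⟨f, x, ρ⟩, y⟩
    simp only [hψ]
    have h2 : (Equiv.swap y x).trans ((Equiv.swap x y).trans f) = f := by
      rw [Equiv.swap_comm y x, ← Equiv.trans_assoc, Equiv.swap_swap, Equiv.refl_trans]
    rw [h2]
  have hkey : ∀ ω, ψ ω ∈ Em2 ↔ ω ∈ Em := by
    rintro ⟨⟨f, x, ρ⟩, y⟩
    simp only [hψ, hEm2, hEm, hFstar, Finset.mem_filter, Finset.mem_univ, true_and]
    rw [update_swap_eq f x y]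
    rw [show ((Equiv.swap x y).trans f) y = f x from by simp]
  -- (c)
  have hc : Em.card = Em2.card := by
    apply Finset.card_bij (fun ω _ => ψ ω)
    · intro ω hω; exact (hkey ω).mpr hω
    · intro a ha' b hb' h
      calc a = ψ (ψ a) := (hinv a).symm
        _ = ψ (ψ b) := by rw [h]
        _ = b := hinv b
    · intro ω' hω'
      exact ⟨ψ ω', (hkey (ψ ω')).mp (by rwa [hinv ω']), hinv ω'⟩
  -- (d)
  have hd : Em2 ⊆ El ∪ Bad := by
    intro ω hω
    by_cases hmem : ω.2 ∈ Q ω.1.2.2 (ω.1.1 ω.1.2.1) ω.1.1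
    · exact Finset.mem_union_right _ (by simp [hBad, hmem])
    · refine Finset.mem_union_left _ ?_
      have hag : A ω.1.2.2 (Fstar ω) (ω.1.1 ω.1.2.1) = A ω.1.2.2 ω.1.1 (ω.1.1 ω.1.2.1) :=
        hQ _ _ _ _ (fun u hu =>
          Function.update_of_ne (fun h => hmem (by rw [← h]; exact hu)) _ _)
      simp only [hEl, Finset.mem_filter, Finset.mem_univ, true_and]
      rw [← hag]
      exact (Finset.mem_filter.mp hω).2
  -- (e)
  have he : Bad.card ≤ Fintype.card (Equiv.Perm (Fin n → Bool) × (Fin n → Bool) × R) * q := by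
    have hsub : Bad ⊆ Finset.univ.biUnion
        (fun b : Equiv.Perm (Fin n → Bool) × (Fin n → Bool) × R =>
          {b} ×ˢ Q b.2.2 (b.1 b.2.1) b.1) := by
      intro ω hω
      simp only [Finset.mem_biUnion, Finset.mem_product, Finset.mem_singleton]
      exact ⟨ω.1, Finset.mem_univ _, rfl, (Finset.mem_filter.mp hω).2⟩
    calc Bad.card ≤ _ := Finset.card_le_card hsub
      _ ≤ ∑ b : Equiv.Perm (Fin n → Bool) × (Fin n → Bool) × R,
            ({b} ×ˢ Q b.2.2 (b.1 b.2.1) ⇑b.1).card := Finset.card_biUnion_le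
      _ ≤ ∑ _b : Equiv.Perm (Fin n → Bool) × (Fin n → Bool) × R, q :=
            Finset.sum_le_sum (fun b _ => by
              rw [Finset.card_product, Finset.card_singleton, one_mul]
              exact hQcard _ _ _)
      _ = Fintype.card (Equiv.Perm (Fin n → Bool) × (Fin n → Bool) × R) * q := by
            rw [Finset.sum_const, Finset.card_univ, smul_eq_mul]
  -- (f)
  have hf : El.card = Fintype.card (Equiv.Perm (Fin n → Bool) × (Fin n → Bool) × R) := by
    have himg : El = Finset.univ.image
        (fun b : Equiv.Perm (Fin n → Bool) × (Fin n → Bool) × R =>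
          (b, A b.2.2 b.1 (b.1 b.2.1))) := by
      ext ω
      simp only [hEl, Finset.mem_filter, Finset.mem_univ, true_and, Finset.mem_image]
      constructor
      · intro h
        exact ⟨ω.1, by simp [h]⟩
      · rintro ⟨b, -, rfl⟩; rfl
    rw [himg, Finset.card_image_of_injective _ (fun a b h => congrArg Prod.fst h),
      Finset.card_univ]
  -- combine the counting estimates
  have main : S.card * 2 ^ n
      ≤ (2 * q + 1) * Fintype.card (Equiv.Perm (Fin n → Bool) × (Fin n → Bool) × R) := by
    have h1 : Er.card ≤ Em.card + Bad.card :=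
      (Finset.card_le_card hb).trans (Finset.card_union_le _ _)
    have h2 : Em2.card ≤ El.card + Bad.card :=
      (Finset.card_le_card hd).trans (Finset.card_union_le _ _)
    calc S.card * 2 ^ n = Er.card := ha.symm
      _ ≤ Em.card + Bad.card := h1
      _ = Em2.card + Bad.card := by rw [hc]
      _ ≤ (El.card + Bad.card) + Bad.card := by omega
      _ ≤ (Fintype.card (Equiv.Perm (Fin n → Bool) × (Fin n → Bool) × R)
            + Fintype.card (Equiv.Perm (Fin n → Bool) × (Fin n → Bool) × R) * q)
          + Fintype.card (Equiv.Perm (Fin n → Bool) × (Fin n → Bool) × R) * q := by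
        have := he; omega
      _ = (2 * q + 1) * Fintype.card (Equiv.Perm (Fin n → Bool) × (Fin n → Bool) × R) := by
        ring
  -- pass to real numbers
  have hMpos : 0 < Fintype.card (Equiv.Perm (Fin n → Bool) × (Fin n → Bool) × R) :=
    Fintype.card_pos
  rw [div_le_div_iff₀ (by exact_mod_cast hMpos) (by positivity)]
  have : ((S.card : ℝ)) * 2 ^ n
      ≤ (2 * q + 1) * Fintype.card (Equiv.Perm (Fin n → Bool) × (Fin n → Bool) × R) := by
    exact_mod_cast main
  linarith
end

section
/- Let Y ⊆ {0,1}^n with |Y| = 2^{n/100r} dividing 2^n, let f be drawn uniformly from the regular surjections {0,1}^n → Y, and let x be uniform in {0,1}^n. For any oracle algorithm A making at most q = 2^{n/1000r} queries to f (and to an arbitrary fixed oracle independent of f), the probability that A(f(x)) outputs some x' with f(x') = f(x) is at most (2q+1)/|Y|. -/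
open Finset
open scoped Classical

/-- The set of regular surjections from `{0,1}^n` onto `Y`. -/
noncomputable def regSurj (n : ℕ) (Y : Finset (Fin n → Bool)) :
    Finset ((Fin n → Bool) → (Fin n → Bool)) :=
  Finset.univ.filter (fun f =>
    (∀ a, f a ∈ Y) ∧
    ∀ y ∈ Y, (Finset.univ.filter (fun a => f a = y)).card = 2 ^ n / Y.card)

section AuxBPU

variable {α : Type*} [Fintype α] [DecidableEq α]

noncomputable def Reg (Y : Finset α) (K : ℕ) : Finset (α → α) :=
  Finset.univ.filter (fun f =>
    (∀ a, f a ∈ Y) ∧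
    ∀ y ∈ Y, (Finset.univ.filter (fun a => f a = y)).card = K)

lemma mem_Reg {Y : Finset α} {K : ℕ} {f : α → α} :
    f ∈ Reg Y K ↔ (∀ a, f a ∈ Y) ∧
      ∀ y ∈ Y, (Finset.univ.filter (fun a => f a = y)).card = K := by
  simp [Reg]

lemma fiber_le {Y : Finset α} {K : ℕ} {g : α → α} (hg : g ∈ Reg Y K) (y : α) :
    (Finset.univ.filter (fun b => g b = y)).card ≤ K := by
  rw [mem_Reg] at hg
  by_cases hy : y ∈ Y
  · exact le_of_eq (hg.2 y hy)
  · have : (Finset.univ.filter (fun b => g b = y)) = ∅ := by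
      apply Finset.filter_eq_empty_iff.2
      intro b _ hb
      exact hy (hb ▸ hg.1 b)
    simp [this]

/-- The swap-counting lemma. -/
lemma swap_count {Y : Finset α} {K q : ℕ} (u y : α) (B : Finset (α → α))
    (hB : B ⊆ Reg Y K)
    (hstab : ∀ f ∈ B, f u = y → ∃ P : Finset α, P.card ≤ q ∧
      ∀ b, b ∉ P → b ≠ u → f b ≠ y → f ∘ Equiv.swap u b ∈ B) :
    (B.filter (fun f => f u = y)).card * (Fintype.card α - K - q - 1) ≤ B.card * K := by
  classical
  have hstab' : ∀ f : α → α, ∃ Pf : Finset α, Pf.card ≤ q ∧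
      (f ∈ B → f u = y → ∀ b, b ∉ Pf → b ≠ u → f b ≠ y → f ∘ Equiv.swap u b ∈ B) := by
    intro f
    by_cases h1 : f ∈ B
    · by_cases h2 : f u = y
      · obtain ⟨Pf, h3, h4⟩ := hstab f h1 h2
        exact ⟨Pf, h3, fun _ _ => h4⟩
      · exact ⟨∅, by simp, fun _ h2' => absurd h2' h2⟩
    · exact ⟨∅, by simp, fun hc => (h1 hc).elim⟩
  choose P hPq hPswap using hstab'
  have hPspec : ∀ f ∈ B, f u = y → (P f).card ≤ q ∧
      ∀ b, b ∉ P f → b ≠ u → f b ≠ y → f ∘ Equiv.swap u b ∈ B := by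
    intro f hf hfu
    exact ⟨hPq f, hPswap f hf hfu⟩
  set Source : Finset ((α → α) × α) :=
    ((B.filter (fun f => f u = y)) ×ˢ Finset.univ).filter
      (fun p => p.2 ∉ P p.1 ∧ p.2 ≠ u ∧ p.1 p.2 ≠ y) with hSo
  set Target : Finset ((α → α) × α) :=
    (B ×ˢ Finset.univ).filter (fun p => p.1 p.2 = y) with hTa
  have hmemS : ∀ p : (α → α) × α, p ∈ Source ↔
      (p.1 ∈ B ∧ p.1 u = y) ∧ p.2 ∉ P p.1 ∧ p.2 ≠ u ∧ p.1 p.2 ≠ y := by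
    intro p
    simp [hSo, Finset.mem_filter, Finset.mem_product, and_assoc]
  have hmemT : ∀ p : (α → α) × α, p ∈ Target ↔ p.1 ∈ B ∧ p.1 p.2 = y := by
    intro p
    simp [hTa, Finset.mem_filter, Finset.mem_product]
  -- lower bound for Source
  have h1 : Source.card = ∑ f ∈ B.filter (fun f => f u = y),
      (Finset.univ.filter (fun b => b ∉ P f ∧ b ≠ u ∧ f b ≠ y)).card := by
    rw [Finset.card_eq_sum_card_fiberwise
      (f := fun p : (α → α) × α => p.1) (t := B.filter (fun f => f u = y))
      (by intro p hp
          rw [Finset.mem_coe, hmemS] at hp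
          simp only [Finset.mem_coe, Finset.mem_filter]
          exact ⟨hp.1.1, hp.1.2⟩)]
    apply Finset.sum_congr rfl
    intro f hf
    apply Finset.card_bij (fun p _ => p.2)
    · intro p hp
      simp only [Finset.mem_filter] at hp
      obtain ⟨hp1, h3⟩ := hp
      rw [hmemS] at hp1
      subst h3
      simp only [Finset.mem_filter, Finset.mem_univ, true_and]
      exact hp1.2
    · intro p hp p' hp' hpp
      simp only [Finset.mem_filter] at hp hp'
      exact Prod.ext (hp.2.trans hp'.2.symm) hpp
    · intro b hb
      simp only [Finset.mem_filter, Finset.mem_univ, true_and] at hb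
      simp only [Finset.mem_filter] at hf
      refine ⟨(f, b), ?_, rfl⟩
      rw [Finset.mem_filter, hmemS]
      exact ⟨⟨hf, ⟨hb.1, hb.2.1, hb.2.2⟩⟩, rfl⟩
  have h2 : (B.filter (fun f => f u = y)).card * (Fintype.card α - K - q - 1)
      ≤ Source.card := by
    rw [h1, ← smul_eq_mul, ← Finset.sum_const]
    apply Finset.sum_le_sum
    intro f hf
    simp only [Finset.mem_filter] at hf
    have hcard : (Finset.univ.filter (fun b => b ∉ P f ∧ b ≠ u ∧ f b ≠ y)).card
        + (Finset.univ.filter (fun b => ¬(b ∉ P f ∧ b ≠ u ∧ f b ≠ y))).card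
        = Fintype.card α := by
      rw [Finset.card_filter_add_card_filter_not, Finset.card_univ]
    have hsub : (Finset.univ.filter (fun b => ¬(b ∉ P f ∧ b ≠ u ∧ f b ≠ y)))
        ⊆ (P f ∪ {u}) ∪ Finset.univ.filter (fun b => f b = y) := by
      intro b hb
      simp only [Finset.mem_filter, Finset.mem_univ, true_and, not_and, not_not] at hb
      by_cases h1 : b ∈ P f
      · exact Finset.mem_union_left _ (Finset.mem_union_left _ h1)
      · by_cases h2 : b = u
        · exact Finset.mem_union_left _ (Finset.mem_union_right _ (by simp [h2]))
        · have := hb h1 h2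
          exact Finset.mem_union_right _ (by simp [this])
    have hc2 : (Finset.univ.filter (fun b => ¬(b ∉ P f ∧ b ≠ u ∧ f b ≠ y))).card
        ≤ q + 1 + K := by
      refine le_trans (Finset.card_le_card hsub) ?_
      refine le_trans (Finset.card_union_le _ _) ?_
      have := Finset.card_union_le (P f) ({u} : Finset α)
      have hq' := (hPspec f hf.1 hf.2).1
      have hfib := fiber_le (hB hf.1) y
      simp only [Finset.card_singleton] at this
      clear h1
      omega
    have hN : Finset.univ.card = Fintype.card α := Finset.card_univ
    clear h1
    omega
  -- injection into Target
  have h3 : Source.card ≤ Target.card := by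
    refine Finset.card_le_card_of_injOn
      (fun p => (p.1 ∘ Equiv.swap u p.2, p.2)) ?_ ?_
    · intro p hp
      rw [Finset.mem_coe, hmemS] at hp
      obtain ⟨⟨hpB, hpu⟩, hnP, hnu, hny⟩ := hp
      rw [Finset.mem_coe, hmemT]
      constructor
      · exact (hPspec p.1 hpB hpu).2 p.2 hnP hnu hny
      · simp only [Function.comp]
        rw [Equiv.swap_apply_right]
        exact hpu
    · intro p hp p' hp' heq
      simp only [Prod.mk.injEq] at heq
      obtain ⟨hfe, hbe⟩ := heq
      have : p.1 = p'.1 := by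
        funext x
        have := congrFun hfe (Equiv.swap u p.2 x)
        simpa [hbe, Function.comp, Equiv.swap_apply_self] using this
      exact Prod.ext this hbe
  -- upper bound for Target
  have h4 : Target.card ≤ B.card * K := by
    rw [Finset.card_eq_sum_card_fiberwise
      (f := fun p : (α → α) × α => p.1) (t := B)
      (by intro p hp; rw [Finset.mem_coe, hmemT] at hp; exact hp.1)]
    rw [← smul_eq_mul, ← Finset.sum_const]
    apply Finset.sum_le_sum
    intro g hg
    have : (Target.filter (fun p => p.1 = g)).card
        ≤ (Finset.univ.filter (fun b => g b = y)).card := by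
      apply Finset.card_le_card_of_injOn (fun p => p.2)
      · intro p hp
        simp only [Finset.mem_coe, Finset.mem_filter] at hp
        obtain ⟨hp1, h3⟩ := hp
        rw [hmemT] at hp1
        subst h3
        simp only [Finset.mem_coe, Finset.mem_filter, Finset.mem_univ, true_and]
        exact hp1.2
      · intro p hp p' hp' hpp
        simp only [Finset.coe_filter, Set.mem_setOf_eq] at hp hp'
        exact Prod.ext (hp.2.trans hp'.2.symm) hpp
    exact le_trans this (fiber_le (hB hg) y)
  calc (B.filter (fun f => f u = y)).card * (Fintype.card α - K - q - 1)
      ≤ Source.card := h2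
    _ ≤ Target.card := h3
    _ ≤ B.card * K := h4


lemma Reg_swap {Y : Finset α} {K : ℕ} {f : α → α} (hf : f ∈ Reg Y K) (u b : α) :
    f ∘ Equiv.swap u b ∈ Reg Y K := by
  rw [mem_Reg] at hf ⊢
  refine ⟨fun a => hf.1 _, fun y hy => ?_⟩
  rw [← hf.2 y hy]
  apply Finset.card_bij' (fun a _ => Equiv.swap u b a) (fun a _ => Equiv.swap u b a)
  · intro a ha
    simp only [mem_filter, mem_univ, true_and] at ha ⊢
    simpa using ha
  · intro a ha
    simp only [mem_filter, mem_univ, true_and, Function.comp] at ha ⊢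
    simpa using ha
  · intro a _; simp
  · intro a _; simp

noncomputable def B1 (Y : Finset α) (K q : ℕ) (A : (α → α) → α → α) (y u : α) :
    Finset (α → α) :=
  (Reg Y K).filter (fun f => A f y = u ∧ ∃ Q : Finset α, Q.card ≤ q ∧ u ∉ Q ∧
    ∀ g : α → α, (∀ v ∈ Q, g v = f v) → A g y = A f y)

noncomputable def B2 (Y : Finset α) (K q : ℕ) (A : (α → α) → α → α) (y u : α) :
    Finset (α → α) :=
  (Reg Y K).filter (fun f => ∃ g₀ : α → α, ∃ Q : Finset α, Q.card ≤ q ∧ u ∈ Q ∧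
    A g₀ y = u ∧ g₀ u = y ∧ (∀ h : α → α, (∀ v ∈ Q, h v = g₀ v) → A h y = A g₀ y) ∧
    (∀ v ∈ Q, v ≠ u → f v = g₀ v))

lemma cover (Y : Finset α) (K q : ℕ) (A : (α → α) → α → α) (y : α)
    (hquery : ∀ f : α → α, ∃ Q : Finset α, Q.card ≤ q ∧
      ∀ g, (∀ v ∈ Q, g v = f v) → A g y = A f y) :
    (Reg Y K).filter (fun f => f (A f y) = y) ⊆
      Finset.univ.biUnion
        (fun u => (B1 Y K q A y u ∪ B2 Y K q A y u).filter (fun f => f u = y)) := by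
  intro f hf
  simp only [mem_filter] at hf
  obtain ⟨hfR, hfy⟩ := hf
  obtain ⟨Q, hQ, hcert⟩ := hquery f
  refine Finset.mem_biUnion.2 ⟨A f y, Finset.mem_univ _, ?_⟩
  rw [Finset.mem_filter]
  refine ⟨?_, hfy⟩
  by_cases hu : A f y ∈ Q
  · apply Finset.mem_union_right
    rw [B2, Finset.mem_filter]
    exact ⟨hfR, f, Q, hQ, hu, rfl, hfy, hcert, fun v _ _ => rfl⟩
  · apply Finset.mem_union_left
    rw [B1, Finset.mem_filter]
    exact ⟨hfR, rfl, Q, hQ, hu, hcert⟩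

lemma B1_stab (Y : Finset α) (K q : ℕ) (A : (α → α) → α → α) (y u : α) :
    ∀ f ∈ B1 Y K q A y u, f u = y → ∃ P : Finset α, P.card ≤ q ∧
      ∀ b, b ∉ P → b ≠ u → f b ≠ y → f ∘ Equiv.swap u b ∈ B1 Y K q A y u := by
  intro f hf _
  rw [B1, Finset.mem_filter] at hf
  obtain ⟨hfR, hAu, Q, hQq, huQ, hcert⟩ := hf
  refine ⟨Q, hQq, fun b hbQ hbu hby => ?_⟩
  have hagree : ∀ v ∈ Q, (f ∘ Equiv.swap u b) v = f v := by
    intro v hv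
    have hvu : v ≠ u := fun h => huQ (h ▸ hv)
    have hvb : v ≠ b := fun h => hbQ (h ▸ hv)
    simp [Function.comp, Equiv.swap_apply_of_ne_of_ne hvu hvb]
  have hA : A (f ∘ Equiv.swap u b) y = A f y := hcert _ hagree
  rw [B1, Finset.mem_filter]
  refine ⟨Reg_swap hfR u b, hA.trans hAu, Q, hQq, huQ, ?_⟩
  intro g hg
  rw [hA]
  exact hcert g (fun v hv => (hg v hv).trans (hagree v hv))

lemma B2_stab (Y : Finset α) (K q : ℕ) (A : (α → α) → α → α) (y u : α) :
    ∀ f ∈ B2 Y K q A y u, f u = y → ∃ P : Finset α, P.card ≤ q ∧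
      ∀ b, b ∉ P → b ≠ u → f b ≠ y → f ∘ Equiv.swap u b ∈ B2 Y K q A y u := by
  intro f hf _
  rw [B2, Finset.mem_filter] at hf
  obtain ⟨hfR, g₀, Q, hQq, huQ, hAg, hg0u, hcert, hagr⟩ := hf
  refine ⟨Q, hQq, fun b hbQ hbu hby => ?_⟩
  rw [B2, Finset.mem_filter]
  refine ⟨Reg_swap hfR u b, g₀, Q, hQq, huQ, hAg, hg0u, hcert, ?_⟩
  intro v hv hvu
  have hvb : v ≠ b := fun h => hbQ (h ▸ hv)
  have : (f ∘ Equiv.swap u b) v = f v := by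
    simp [Function.comp, Equiv.swap_apply_of_ne_of_ne hvu hvb]
  rw [this]
  exact hagr v hv hvu

lemma count1 (Y : Finset α) (K q : ℕ) (A : (α → α) → α → α) (y : α) (f : α → α) :
    (Finset.univ.filter (fun u => f ∈ B1 Y K q A y u)).card ≤ 1 := by
  apply Finset.card_le_one.2
  intro a ha b hb
  simp only [Finset.mem_filter, B1] at ha hb
  exact (ha.2.2.1).symm.trans hb.2.2.1

lemma count2 (Y : Finset α) (K q : ℕ) (A : (α → α) → α → α) (y : α)
    (hq1 : 1 ≤ q) (f : α → α) :
    (Finset.univ.filter (fun u => f ∈ B2 Y K q A y u)).card ≤ 2 * q - 1 := by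
  set U := Finset.univ.filter (fun u => f ∈ B2 Y K q A y u) with hU
  have hw : ∀ u : α, ∃ w : (α → α) × Finset α, u ∈ U →
      (w.2.card ≤ q ∧ u ∈ w.2 ∧ A w.1 y = u ∧ w.1 u = y ∧
       (∀ h : α → α, (∀ v ∈ w.2, h v = w.1 v) → A h y = A w.1 y) ∧
       (∀ v ∈ w.2, v ≠ u → f v = w.1 v)) := by
    intro u
    by_cases hu : u ∈ U
    · have hu' := hu
      rw [hU, Finset.mem_filter] at hu'
      have h2 := hu'.2
      rw [B2, Finset.mem_filter] at h2
      obtain ⟨_, g₀, Q, h1, h2', h3, h4, h5, h6⟩ := h2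
      exact ⟨(g₀, Q), fun _ => ⟨h1, h2', h3, h4, h5, h6⟩⟩
    · exact ⟨(id, ∅), fun h => absurd h hu⟩
  choose w hwspec using hw
  have hpair : ∀ u ∈ U, ∀ v ∈ U, u ≠ v →
      (v ∈ (w u).2 ∧ (w u).1 v ≠ y) ∨ (u ∈ (w v).2 ∧ (w v).1 u ≠ y) := by
    intro u hu v hv huv
    by_contra hcon
    push_neg at hcon
    obtain ⟨hc1, hc2⟩ := hcon
    obtain ⟨hqu, hu1, hu2, hu3, hu4, hu5⟩ := hwspec u hu
    obtain ⟨hqv, hv1, hv2, hv3, hv4, hv5⟩ := hwspec v hv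
    set h : α → α := fun x => if x = u ∨ x = v then y else f x with hh
    have hhu : A h y = u := by
      rw [← hu2]
      apply hu4
      intro v' hv'
      by_cases e1 : v' = u
      · subst e1; simpa [hh] using hu3.symm
      · by_cases e2 : v' = v
        · subst e2
          have := hc1 hv'
          simp [hh, this]
        · have := hu5 v' hv' e1
          simp [hh, e1, e2, this]
    have hhv : A h y = v := by
      rw [← hv2]
      apply hv4
      intro v' hv'
      by_cases e2 : v' = v
      · subst e2; simpa [hh] using hv3.symm
      · by_cases e1 : v' = u
        · subst e1
          have := hc2 hv'
          simp [hh, this]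
        · have := hv5 v' hv' e2
          simp [hh, e1, e2, this]
    exact huv (hhu.symm.trans hhv)
  set E := U.offDiag.filter (fun p => p.2 ∈ (w p.1).2 ∧ (w p.1).1 p.2 ≠ y) with hE
  have hcover : U.offDiag ⊆ E ∪ E.image Prod.swap := by
    intro p hp
    have hp' := Finset.mem_offDiag.1 hp
    rcases hpair p.1 hp'.1 p.2 hp'.2.1 hp'.2.2 with h | h
    · exact Finset.mem_union_left _ (Finset.mem_filter.2 ⟨hp, h⟩)
    · apply Finset.mem_union_right
      refine Finset.mem_image.2 ⟨(p.2, p.1), ?_, by simp⟩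
      exact Finset.mem_filter.2
        ⟨Finset.mem_offDiag.2 ⟨hp'.2.1, hp'.1, Ne.symm hp'.2.2⟩, h⟩
  have hEcard : E.card ≤ U.card * (q - 1) := by
    rw [Finset.card_eq_sum_card_fiberwise (f := fun p : α × α => p.1) (t := U)
      (by intro p hp; exact (Finset.mem_offDiag.1 (Finset.mem_filter.1 hp).1).1)]
    rw [← smul_eq_mul, ← Finset.sum_const]
    apply Finset.sum_le_sum
    intro u hu
    have hle : (E.filter (fun p => p.1 = u)).card ≤ (((w u).2).erase u).card := by
      apply Finset.card_le_card_of_injOn (fun p => p.2)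
      · intro p hp
        simp only [Finset.mem_coe, Finset.mem_filter] at hp
        obtain ⟨hp1, h3⟩ := hp
        rw [hE, Finset.mem_filter] at hp1
        obtain ⟨hoff, hQ, hGy⟩ := hp1
        have hne := (Finset.mem_offDiag.1 hoff).2.2
        subst h3
        exact Finset.mem_erase.2 ⟨Ne.symm hne, hQ⟩
      · intro p hp p' hp' hpp
        simp only [Finset.coe_filter, Set.mem_setOf_eq] at hp hp'
        exact Prod.ext (hp.2.trans hp'.2.symm) hpp
    have h2 : (((w u).2).erase u).card ≤ q - 1 := by
      have he := Finset.card_erase_of_mem (hwspec u hu).2.1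
      have hc := (hwspec u hu).1
      omega
    omega
  have hoff : U.card * U.card - U.card ≤ E.card + E.card := by
    have h1 : U.offDiag.card ≤ (E ∪ E.image Prod.swap).card :=
      Finset.card_le_card hcover
    have h2 : (E ∪ E.image Prod.swap).card ≤ E.card + (E.image Prod.swap).card :=
      Finset.card_union_le _ _
    have h3 : (E.image Prod.swap).card ≤ E.card := Finset.card_image_le
    have h4 : U.offDiag.card = U.card * U.card - U.card := Finset.offDiag_card U
    omega
  by_contra hcon
  push_neg at hcon
  have hm : 2 * q ≤ U.card := by omega
  have hm0 : 0 < U.card := by omega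
  have e1 : U.card * U.card - U.card = U.card * (U.card - 1) := by
    rw [Nat.mul_sub]
    ring_nf
  have e2 : U.card * (2 * q - 1) ≤ U.card * (U.card - 1) :=
    Nat.mul_le_mul_left _ (by omega)
  have e3 : E.card + E.card ≤ U.card * (q - 1) + U.card * (q - 1) := by omega
  have e4 : U.card * (q - 1) + U.card * (q - 1) = U.card * (2 * q - 2) := by
    rw [← Nat.mul_add]
    congr 1
    omega
  have e5 : U.card * (2 * q - 1) ≤ U.card * (2 * q - 2) := by omega
  have := Nat.le_of_mul_le_mul_left e5 hm0
  omega

lemma sum_B1_le (Y : Finset α) (K q : ℕ) (A : (α → α) → α → α) (y : α) :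
    ∑ u : α, (B1 Y K q A y u).card ≤ (Reg Y K).card := by
  have e1 : ∀ u : α, (B1 Y K q A y u).card
      = (Finset.univ.filter (fun f => f ∈ B1 Y K q A y u)).card := by
    intro u
    rw [Finset.filter_mem_eq_inter, Finset.univ_inter]
  calc ∑ u : α, (B1 Y K q A y u).card
      = ∑ u : α, (Finset.univ.filter (fun f => f ∈ B1 Y K q A y u)).card := by
        exact Finset.sum_congr rfl (fun u _ => e1 u)
    _ = ∑ f : α → α, (Finset.univ.filter (fun u => f ∈ B1 Y K q A y u)).card := by
        simp only [Finset.card_filter]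
        exact Finset.sum_comm
    _ ≤ ∑ f : α → α, (if f ∈ Reg Y K then 1 else 0) := by
        apply Finset.sum_le_sum
        intro f _
        by_cases hfR : f ∈ Reg Y K
        · simp only [hfR, if_true]
          exact count1 Y K q A y f
        · simp only [hfR, if_false, Finset.card_eq_zero, Nat.le_zero]
          rw [Finset.filter_eq_empty_iff]
          intro u _
          intro hmem
          rw [B1, Finset.mem_filter] at hmem
          exact hfR hmem.1
    _ = (Reg Y K).card := by
        rw [← Finset.card_filter, Finset.filter_mem_eq_inter, Finset.univ_inter]

lemma sum_B2_le (Y : Finset α) (K q : ℕ) (A : (α → α) → α → α) (y : α) (hq1 : 1 ≤ q) :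
    ∑ u : α, (B2 Y K q A y u).card ≤ (2 * q - 1) * (Reg Y K).card := by
  have e1 : ∀ u : α, (B2 Y K q A y u).card
      = (Finset.univ.filter (fun f => f ∈ B2 Y K q A y u)).card := by
    intro u
    rw [Finset.filter_mem_eq_inter, Finset.univ_inter]
  calc ∑ u : α, (B2 Y K q A y u).card
      = ∑ u : α, (Finset.univ.filter (fun f => f ∈ B2 Y K q A y u)).card := by
        exact Finset.sum_congr rfl (fun u _ => e1 u)
    _ = ∑ f : α → α, (Finset.univ.filter (fun u => f ∈ B2 Y K q A y u)).card := by
        simp only [Finset.card_filter]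
        exact Finset.sum_comm
    _ ≤ ∑ f : α → α, (if f ∈ Reg Y K then 2 * q - 1 else 0) := by
        apply Finset.sum_le_sum
        intro f _
        by_cases hfR : f ∈ Reg Y K
        · simp only [hfR, if_true]
          exact count2 Y K q A y hq1 f
        · simp only [hfR, if_false, Nat.le_zero, Finset.card_eq_zero]
          rw [Finset.filter_eq_empty_iff]
          intro u _
          intro hmem
          rw [B2, Finset.mem_filter] at hmem
          exact hfR hmem.1
    _ = (2 * q - 1) * (Reg Y K).card := by
        rw [Finset.sum_ite, Finset.sum_const, Finset.sum_const_zero, add_zero,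
          smul_eq_mul, Finset.filter_mem_eq_inter, Finset.univ_inter, mul_comm]

lemma per_y (Y : Finset α) (K q : ℕ) (A : (α → α) → α → α) (y : α) (hq1 : 1 ≤ q)
    (hquery : ∀ f : α → α, ∃ Q : Finset α, Q.card ≤ q ∧
      ∀ g, (∀ v ∈ Q, g v = f v) → A g y = A f y) :
    ((Reg Y K).filter (fun f => f (A f y) = y)).card * (Fintype.card α - K - q - 1)
      ≤ 2 * q * ((Reg Y K).card * K) := by
  set D := Fintype.card α - K - q - 1 with hD
  have h0 : ((Reg Y K).filter (fun f => f (A f y) = y)).card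
      ≤ (∑ u : α, ((B1 Y K q A y u).filter (fun f => f u = y)).card)
        + ∑ u : α, ((B2 Y K q A y u).filter (fun f => f u = y)).card := by
    refine le_trans (Finset.card_le_card (cover Y K q A y hquery)) ?_
    refine le_trans Finset.card_biUnion_le ?_
    rw [← Finset.sum_add_distrib]
    apply Finset.sum_le_sum
    intro u _
    rw [Finset.filter_union]
    exact Finset.card_union_le _ _
  have h1 : ∀ u : α, ((B1 Y K q A y u).filter (fun f => f u = y)).card * D
      ≤ (B1 Y K q A y u).card * K := by
    intro u
    rw [hD]
    exact swap_count u y _ (by rw [B1]; exact Finset.filter_subset _ _)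
      (B1_stab Y K q A y u)
  have h2 : ∀ u : α, ((B2 Y K q A y u).filter (fun f => f u = y)).card * D
      ≤ (B2 Y K q A y u).card * K := by
    intro u
    rw [hD]
    exact swap_count u y _ (by rw [B2]; exact Finset.filter_subset _ _)
      (B2_stab Y K q A y u)
  have h3 := sum_B1_le Y K q A y
  have h4 := sum_B2_le Y K q A y hq1
  calc ((Reg Y K).filter (fun f => f (A f y) = y)).card * D
      ≤ ((∑ u : α, ((B1 Y K q A y u).filter (fun f => f u = y)).card)
        + ∑ u : α, ((B2 Y K q A y u).filter (fun f => f u = y)).card) * D :=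
        Nat.mul_le_mul_right _ h0
    _ = (∑ u : α, ((B1 Y K q A y u).filter (fun f => f u = y)).card * D)
        + ∑ u : α, ((B2 Y K q A y u).filter (fun f => f u = y)).card * D := by
        rw [add_mul, Finset.sum_mul, Finset.sum_mul]
    _ ≤ (∑ u : α, (B1 Y K q A y u).card * K)
        + ∑ u : α, (B2 Y K q A y u).card * K :=
        add_le_add (Finset.sum_le_sum (fun u _ => h1 u))
          (Finset.sum_le_sum (fun u _ => h2 u))
    _ = (∑ u : α, (B1 Y K q A y u).card) * K
        + (∑ u : α, (B2 Y K q A y u).card) * K := by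
        rw [Finset.sum_mul, Finset.sum_mul]
    _ ≤ (Reg Y K).card * K + ((2 * q - 1) * (Reg Y K).card) * K :=
        add_le_add (Nat.mul_le_mul_right _ h3) (Nat.mul_le_mul_right _ h4)
    _ = 2 * q * ((Reg Y K).card * K) := by
        have hq2 : 2 * q - 1 + 1 = 2 * q :=
          Nat.sub_add_cancel (hq1.trans (Nat.le_mul_of_pos_left q two_pos))
        calc (Reg Y K).card * K + ((2 * q - 1) * (Reg Y K).card) * K
            = (2 * q - 1 + 1) * ((Reg Y K).card * K) := by
              generalize 2 * q - 1 = t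
              ring
          _ = 2 * q * ((Reg Y K).card * K) := by rw [hq2]


theorem abstract_main (Y : Finset α) (K q : ℕ) (A : (α → α) → α → α)
    (hquery : ∀ (z : α) (f : α → α), ∃ Q : Finset α, Q.card ≤ q ∧
      ∀ g, (∀ v ∈ Q, g v = f v) → A g z = A f z)
    (hq1 : 1 ≤ q)
    (harith : (2 * q + 1) * (K + q + 1) ≤ Fintype.card α) :
    (Finset.univ.filter (fun p : (α → α) × α =>
        p.1 ∈ Reg Y K ∧ p.1 (A p.1 (p.1 p.2)) = p.1 p.2)).card * Y.card
      ≤ (2 * q + 1) * ((Reg Y K).card * Fintype.card α) := by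
  classical
  rcases Finset.eq_empty_or_nonempty (Reg Y K) with hR | ⟨f₀, hf₀⟩
  · have : (Finset.univ.filter (fun p : (α → α) × α =>
        p.1 ∈ Reg Y K ∧ p.1 (A p.1 (p.1 p.2)) = p.1 p.2)) = ∅ := by
      rw [Finset.filter_eq_empty_iff]
      intro p _ hp
      rw [hR] at hp
      exact absurd hp.1 (Finset.notMem_empty _)
    simp [this]
  · have hKY : K * Y.card = Fintype.card α := by
      have h := Finset.card_eq_sum_card_fiberwise
        (s := (Finset.univ : Finset α)) (t := Y) (f := f₀)
        (fun x _ => (mem_Reg.1 hf₀).1 x)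
    -- h : univ.card = ∑ y ∈ Y, #(univ.filter fun a => f₀ a = y)
      rw [Finset.card_univ] at h
      rw [Finset.sum_congr rfl (fun y hy => (mem_Reg.1 hf₀).2 y hy)] at h
      rw [Finset.sum_const, smul_eq_mul] at h
      rw [h, mul_comm]
    set D := Fintype.card α - K - q - 1 with hD
    have h3q : 3 * (K + q + 1) ≤ (2 * q + 1) * (K + q + 1) :=
      Nat.mul_le_mul_right _ (by omega)
    have hDpos : 0 < D := by omega
    have hfinal : 2 * q * Fintype.card α ≤ (2 * q + 1) * D := by
      have hKN : K + q + 1 ≤ Fintype.card α := by omega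
      have e2 : (2 * q + 1) * D
          = (2 * q + 1) * Fintype.card α - (2 * q + 1) * (K + q + 1) := by
        rw [hD, show Fintype.card α - K - q - 1
          = Fintype.card α - (K + q + 1) by omega, Nat.mul_sub]
      have e3 : (2 * q + 1) * (K + q + 1) ≤ (2 * q + 1) * Fintype.card α :=
        Nat.mul_le_mul_left _ hKN
      have e4 : 2 * q * Fintype.card α + Fintype.card α
          = (2 * q + 1) * Fintype.card α := by ring
      omega
  -- Scard = K * ∑_{y ∈ Y} |S_y|
    have hS : (Finset.univ.filter (fun p : (α → α) × α =>
        p.1 ∈ Reg Y K ∧ p.1 (A p.1 (p.1 p.2)) = p.1 p.2)).card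
        = ∑ f ∈ Reg Y K,
            (Finset.univ.filter (fun x => f (A f (f x)) = f x)).card := by
      rw [Finset.card_eq_sum_card_fiberwise
        (f := fun p : (α → α) × α => p.1) (t := Reg Y K)
        (by intro p hp; exact (Finset.mem_filter.1 hp).2.1)]
      apply Finset.sum_congr rfl
      intro f hf
      apply Finset.card_bij (fun p _ => p.2)
      · intro p hp
        simp only [Finset.mem_filter, Finset.mem_univ, true_and] at hp ⊢
        obtain ⟨⟨_, h2⟩, h3⟩ := hp
        rw [← h3]
        exact h2
      · intro p hp p' hp' hpp
        simp only [Finset.mem_filter] at hp hp'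
        exact Prod.ext (hp.2.trans hp'.2.symm) hpp
      · intro x hx
        simp only [Finset.mem_filter, Finset.mem_univ, true_and] at hx
        refine ⟨(f, x), ?_, rfl⟩
        exact Finset.mem_filter.2 ⟨Finset.mem_filter.2 ⟨Finset.mem_univ _, ⟨hf, hx⟩⟩, rfl⟩
    have hSf : ∀ f ∈ Reg Y K,
        (Finset.univ.filter (fun x => f (A f (f x)) = f x)).card
          = K * (Y.filter (fun y => f (A f y) = y)).card := by
      intro f hf
      rw [Finset.card_eq_sum_card_fiberwise (f := f) (t := Y)
        (fun x _ => (mem_Reg.1 hf).1 x)]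
      have key : ∀ y ∈ Y,
          ((Finset.univ.filter (fun x => f (A f (f x)) = f x)).filter
            (fun x => f x = y)).card = if f (A f y) = y then K else 0 := by
        intro y hy
        rw [Finset.filter_filter]
        by_cases hgood : f (A f y) = y
        · rw [if_pos hgood, ← (mem_Reg.1 hf).2 y hy]
          congr 1
          apply Finset.filter_congr
          intro x _
          constructor
          · intro hx; exact hx.2
          · intro hx
            refine ⟨?_, hx⟩
            rw [hx, hgood]
        · rw [if_neg hgood, Finset.card_eq_zero, Finset.filter_eq_empty_iff]
          intro x _ hx
          rw [hx.2] at hx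
          exact hgood hx.1
      rw [Finset.sum_congr rfl key, Finset.sum_ite, Finset.sum_const,
        Finset.sum_const_zero, add_zero, smul_eq_mul, mul_comm]
    have hsum : ∑ f ∈ Reg Y K, (Y.filter (fun y => f (A f y) = y)).card
        = ∑ y ∈ Y, ((Reg Y K).filter (fun f => f (A f y) = y)).card := by
      simp only [Finset.card_filter]
      exact Finset.sum_comm
    have hScard : (Finset.univ.filter (fun p : (α → α) × α =>
        p.1 ∈ Reg Y K ∧ p.1 (A p.1 (p.1 p.2)) = p.1 p.2)).card
        = K * ∑ y ∈ Y, ((Reg Y K).filter (fun f => f (A f y) = y)).card := by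
      rw [hS, Finset.sum_congr rfl hSf, ← Finset.mul_sum, hsum]
    have hpery : ∀ y ∈ Y,
        ((Reg Y K).filter (fun f => f (A f y) = y)).card * D
          ≤ 2 * q * ((Reg Y K).card * K) := by
      intro y _
      rw [hD]
      exact per_y (α := α) Y K q A y hq1 (fun f => hquery y f)
    -- multiply out
    have hmain : (Finset.univ.filter (fun p : (α → α) × α =>
        p.1 ∈ Reg Y K ∧ p.1 (A p.1 (p.1 p.2)) = p.1 p.2)).card * D
        ≤ 2 * q * (Reg Y K).card * (K * K) * Y.card := by
      rw [hScard]
      calc K * (∑ y ∈ Y, ((Reg Y K).filter (fun f => f (A f y) = y)).card) * D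
          = K * ∑ y ∈ Y, ((Reg Y K).filter (fun f => f (A f y) = y)).card * D := by
            rw [mul_assoc, Finset.sum_mul]
        _ ≤ K * ∑ _y ∈ Y, 2 * q * ((Reg Y K).card * K) :=
            Nat.mul_le_mul_left _ (Finset.sum_le_sum hpery)
        _ = 2 * q * (Reg Y K).card * (K * K) * Y.card := by
            rw [Finset.sum_const, smul_eq_mul]
            ring
    -- target inequality times D
    have hstep : (Finset.univ.filter (fun p : (α → α) × α =>
        p.1 ∈ Reg Y K ∧ p.1 (A p.1 (p.1 p.2)) = p.1 p.2)).card * Y.card * D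
        ≤ (2 * q + 1) * ((Reg Y K).card * Fintype.card α) * D := by
      have e1 : (Finset.univ.filter (fun p : (α → α) × α =>
          p.1 ∈ Reg Y K ∧ p.1 (A p.1 (p.1 p.2)) = p.1 p.2)).card * Y.card * D
          = ((Finset.univ.filter (fun p : (α → α) × α =>
          p.1 ∈ Reg Y K ∧ p.1 (A p.1 (p.1 p.2)) = p.1 p.2)).card * D) * Y.card := by
        ring
      rw [e1]
      calc ((Finset.univ.filter (fun p : (α → α) × α =>
          p.1 ∈ Reg Y K ∧ p.1 (A p.1 (p.1 p.2)) = p.1 p.2)).card * D) * Y.card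
          ≤ (2 * q * (Reg Y K).card * (K * K) * Y.card) * Y.card :=
            Nat.mul_le_mul_right _ hmain
        _ = 2 * q * (Reg Y K).card * ((K * Y.card) * (K * Y.card)) := by ring
        _ = 2 * q * (Reg Y K).card * (Fintype.card α * Fintype.card α) := by
            rw [hKY]
        _ = (2 * q * Fintype.card α) * ((Reg Y K).card * Fintype.card α) := by ring
        _ ≤ ((2 * q + 1) * D) * ((Reg Y K).card * Fintype.card α) :=
            Nat.mul_le_mul_right _ hfinal
        _ = (2 * q + 1) * ((Reg Y K).card * Fintype.card α) * D := by ring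
    exact Nat.le_of_mul_le_mul_right hstep hDpos

end AuxBPU

/-- Let `Y ⊆ {0,1}^n` with `|Y| = 2^(n/100r)` dividing `2^n`, let `f` be a
uniformly random regular surjection onto `Y` and `x` uniform in `{0,1}^n`.
For any oracle algorithm `A` (a fixed oracle independent of `f` is absorbed
into `A`'s description) making at most `q = 2^(n/1000r)` queries to `f`,
the probability that `A (f x)` outputs a preimage of `f x` is at most
`(2q + 1) / |Y|`. -/
theorem stmt_8 (n r q : ℕ) (hr : 0 < r)
    (hdvd100 : 100 * r ∣ n) (hdvd1000 : 1000 * r ∣ n)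
    (hq : q = 2 ^ (n / (1000 * r)))
    (Y : Finset (Fin n → Bool)) (hYcard : Y.card = 2 ^ (n / (100 * r)))
    (hYdvd : Y.card ∣ 2 ^ n)
    (A : ((Fin n → Bool) → (Fin n → Bool)) → (Fin n → Bool) → (Fin n → Bool))
    (hquery : ∀ (z : Fin n → Bool) (f : (Fin n → Bool) → (Fin n → Bool)),
      ∃ Q : Finset (Fin n → Bool), Q.card ≤ q ∧
        ∀ g, (∀ u ∈ Q, g u = f u) → A g z = A f z) :
    ((Finset.univ.filter
        (fun p : ((Fin n → Bool) → (Fin n → Bool)) × (Fin n → Bool) =>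
          p.1 ∈ regSurj n Y ∧ p.1 (A p.1 (p.1 p.2)) = p.1 p.2)).card : ℝ)
      / ((regSurj n Y).card * 2 ^ n)
    ≤ (2 * q + 1) / Y.card := by
  classical
  have hNcard : Fintype.card (Fin n → Bool) = 2 ^ n := by
    simp [Fintype.card_fun]
  have hreg : regSurj n Y = Reg Y (2 ^ n / Y.card) := rfl
  have hq1 : 1 ≤ q := by rw [hq]; exact Nat.one_le_two_pow
  have hYpos : 0 < Y.card := by rw [hYcard]; positivity
  -- master counting inequality over ℕ
  have master : (Finset.univ.filter
        (fun p : ((Fin n → Bool) → (Fin n → Bool)) × (Fin n → Bool) =>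
          p.1 ∈ regSurj n Y ∧ p.1 (A p.1 (p.1 p.2)) = p.1 p.2)).card * Y.card
      ≤ (2 * q + 1) * ((regSurj n Y).card * 2 ^ n) := by
    by_cases hn : n = 0
    · -- trivial case
      have hgen : (Finset.univ.filter
          (fun p : ((Fin n → Bool) → (Fin n → Bool)) × (Fin n → Bool) =>
            p.1 ∈ regSurj n Y ∧ p.1 (A p.1 (p.1 p.2)) = p.1 p.2)).card
          ≤ (regSurj n Y).card * 2 ^ n := by
        have hsub : (Finset.univ.filter
            (fun p : ((Fin n → Bool) → (Fin n → Bool)) × (Fin n → Bool) =>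
              p.1 ∈ regSurj n Y ∧ p.1 (A p.1 (p.1 p.2)) = p.1 p.2))
            ⊆ (regSurj n Y) ×ˢ Finset.univ := by
          intro p hp
          exact Finset.mem_product.2 ⟨(Finset.mem_filter.1 hp).2.1, Finset.mem_univ _⟩
        calc (Finset.univ.filter
            (fun p : ((Fin n → Bool) → (Fin n → Bool)) × (Fin n → Bool) =>
              p.1 ∈ regSurj n Y ∧ p.1 (A p.1 (p.1 p.2)) = p.1 p.2)).card
            ≤ ((regSurj n Y) ×ˢ Finset.univ).card := Finset.card_le_card hsub
          _ = (regSurj n Y).card * 2 ^ n := by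
            rw [Finset.card_product, Finset.card_univ, hNcard]
      have hY1 : Y.card = 1 := by
        rw [hYcard, hn]
        simp
      rw [hY1, mul_one]
      calc (Finset.univ.filter
          (fun p : ((Fin n → Bool) → (Fin n → Bool)) × (Fin n → Bool) =>
            p.1 ∈ regSurj n Y ∧ p.1 (A p.1 (p.1 p.2)) = p.1 p.2)).card
          ≤ (regSurj n Y).card * 2 ^ n := hgen
        _ ≤ (2 * q + 1) * ((regSurj n Y).card * 2 ^ n) :=
          Nat.le_mul_of_pos_left _ (by omega)
    · -- main case
      set m := n / (1000 * r) with hm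
      set k₁ := n / (100 * r) with hk₁
      have hn1000 : 1000 * r * m = n := Nat.mul_div_cancel' hdvd1000
      have hn100 : 100 * r * k₁ = n := Nat.mul_div_cancel' hdvd100
      have hk110 : k₁ = 10 * m := by
        have h : 100 * r * k₁ = 100 * r * (10 * m) := by
          rw [hn100, ← hn1000]; ring
        exact Nat.eq_of_mul_eq_mul_left (by positivity) h
      have hm1 : 1 ≤ m := by
        rcases Nat.eq_zero_or_pos m with h | h
        · exact absurd (by rw [← hn1000, h, mul_zero]) hn
        · exact h
      have hnm : 1000 * m ≤ n := by
        rw [← hn1000]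
        calc 1000 * m ≤ 1000 * (r * m) :=
          Nat.mul_le_mul_left _ (Nat.le_mul_of_pos_left m hr)
        _ = 1000 * r * m := by ring
      have hqm : q = 2 ^ m := hq
      have hk1n : k₁ ≤ n := by omega
      have hK : 2 ^ n / Y.card = 2 ^ (n - k₁) := by
        rw [hYcard]
        exact Nat.pow_div hk1n two_pos
      have harith : (2 * q + 1) * ((2 ^ n / Y.card) + q + 1) ≤ 2 ^ n := by
        rw [hK, hqm]
        have h2m1 : 1 ≤ (2:ℕ) ^ m := Nat.one_le_two_pow
        have h2pow : (2:ℕ) ^ (m + 2) = 2 ^ m * 4 := by rw [pow_add]; norm_num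
        have h1 : 2 * 2 ^ m + 1 ≤ 2 ^ (m + 2) := by omega
        have h5 : m + 1 ≤ n - k₁ := by omega
        have h6 : (2:ℕ) ^ (m + 1) = 2 ^ m * 2 := by rw [pow_succ]
        have h7 : (2:ℕ) ^ (m + 1) ≤ 2 ^ (n - k₁) := Nat.pow_le_pow_right (by norm_num) h5
        have h8 : (2:ℕ) ^ (n - k₁ + 1) = 2 ^ (n - k₁) * 2 := by rw [pow_succ]
        have h4 : 2 ^ (n - k₁) + 2 ^ m + 1 ≤ 2 ^ (n - k₁ + 1) := by omega
        calc (2 * 2 ^ m + 1) * (2 ^ (n - k₁) + 2 ^ m + 1)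
            ≤ 2 ^ (m + 2) * 2 ^ (n - k₁ + 1) := Nat.mul_le_mul h1 h4
          _ = 2 ^ (m + 2 + (n - k₁ + 1)) := (pow_add 2 _ _).symm
          _ ≤ 2 ^ n := Nat.pow_le_pow_right (by norm_num) (by omega)
      have habs := abstract_main Y (2 ^ n / Y.card) q A hquery hq1
        (by rw [hNcard]; exact harith)
      rw [hNcard] at habs
      rw [hreg]
      exact habs
  -- conclude over ℝ
  by_cases hR : (regSurj n Y).card = 0
  · have hempty : (Finset.univ.filter
        (fun p : ((Fin n → Bool) → (Fin n → Bool)) × (Fin n → Bool) =>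
          p.1 ∈ regSurj n Y ∧ p.1 (A p.1 (p.1 p.2)) = p.1 p.2)) = ∅ := by
      rw [Finset.filter_eq_empty_iff]
      intro p _ hp
      rw [Finset.card_eq_zero.1 hR] at hp
      exact absurd hp.1 (Finset.notMem_empty _)
    rw [hempty]
    simp only [Finset.card_empty, Nat.cast_zero, zero_div]
    positivity
  · have hRpos : 0 < (regSurj n Y).card := Nat.pos_of_ne_zero hR
    rw [div_le_div_iff₀ (by positivity) (by exact_mod_cast hYpos)]
    calc ((Finset.univ.filter
        (fun p : ((Fin n → Bool) → (Fin n → Bool)) × (Fin n → Bool) =>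
          p.1 ∈ regSurj n Y ∧ p.1 (A p.1 (p.1 p.2)) = p.1 p.2)).card : ℝ) * Y.card
        ≤ ((2 * q + 1) * ((regSurj n Y).card * 2 ^ n) : ℕ) := by
          exact_mod_cast master
      _ = (2 * q + 1) * ((regSurj n Y).card * 2 ^ n) := by push_cast; ring
end

section
/- Let P(x) = Σ_j ∏_{i∈e_j} x_i be a multilinear polynomial of degree at most r in Boolean variables with a (δ, rm)-almost independent distribution P_x. Let μ* and E* be the expectation of P and the maximal expectation of any nonempty partial derivative of P under the fully independent distribution with the same marginals. Then Pr_{x←P_x}[P(x) ≥ μ*(1+ε)] ≤ ((1+δ)^r (1 + r^r m^r E*/μ*)/(1+ε))^m. -/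
open Finset
open scoped Classical

private lemma count_le (u r : ℕ) : ∑ k ∈ Finset.range (r+1), u.choose k ≤ (u+1)^r := by
  induction r with
  | zero => simp
  | succ r ih =>
    rw [Finset.sum_range_succ]
    have h1 : u.choose (r+1) ≤ u^(r+1) := Nat.choose_le_pow _ _
    have h2 : u^(r+1) ≤ u * (u+1)^r := by
      rw [pow_succ]
      calc u^r * u ≤ (u+1)^r * u :=
            Nat.mul_le_mul_right _ (Nat.pow_le_pow_left (Nat.le_succ u) r)
        _ = u * (u+1)^r := Nat.mul_comm _ _
    calc ∑ k ∈ Finset.range (r+1), u.choose k + u.choose (r+1)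
        ≤ (u+1)^r + u*(u+1)^r := Nat.add_le_add ih (le_trans h1 h2)
      _ = (u+1)^(r+1) := by ring

private lemma factor_lemma {ι : Type*} [Fintype ι] [DecidableEq ι] (marg : ι → ℝ) (S : Finset ι) :
    ∑ x : ι → Bool, (∏ j, (if x j then marg j else 1 - marg j)) *
      (∏ i ∈ S, (if x i then (1:ℝ) else 0)) = ∏ i ∈ S, marg i := by
  have key : ∀ x : ι → Bool,
      (∏ j, (if x j then marg j else 1 - marg j)) * (∏ i ∈ S, (if x i then (1:ℝ) else 0))
      = ∏ j, ((if x j then marg j else 1 - marg j) *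
          (if j ∈ S then (if x j then (1:ℝ) else 0) else 1)) := by
    intro x
    rw [Finset.prod_mul_distrib]
    congr 1
    rw [Finset.prod_ite_mem, Finset.univ_inter]
  simp_rw [key]
  have h2 := Finset.prod_univ_sum (fun _ : ι => (Finset.univ : Finset Bool))
      (fun j b => (if b then marg j else 1 - marg j) *
        (if j ∈ S then (if b then (1:ℝ) else 0) else 1))
  rw [Fintype.piFinset_univ] at h2
  rw [← h2]
  rw [show (∏ i ∈ S, marg i) = ∏ j, (if j ∈ S then marg j else 1) by
    rw [Finset.prod_ite_mem, Finset.univ_inter]]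
  apply Finset.prod_congr rfl
  intro j _
  rw [Fintype.sum_bool]
  by_cases hj : j ∈ S <;> simp [hj] <;> ring

private lemma aux_ai {ι : Type*} [Fintype ι] [DecidableEq ι] (N : ℕ) (δ : ℝ) (hδ : 0 ≤ δ)
    (w : (ι → Bool) → ℝ) (hw1 : ∑ x, w x = 1)
    (marg : ι → ℝ) (hmarg0 : ∀ j, 0 ≤ marg j)
    (hai : ∀ M : Finset ι, M.card < N → ∀ j ∉ M,
      (∑ x ∈ Finset.univ.filter
          (fun x : ι → Bool => x j = true ∧ ∀ i ∈ M, x i = true), w x)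
        ≤ (1 + δ) * marg j *
          (∑ x ∈ Finset.univ.filter (fun x : ι → Bool => ∀ i ∈ M, x i = true), w x)) :
    ∀ S : Finset ι, S.card ≤ N →
      (∑ x ∈ Finset.univ.filter (fun x : ι → Bool => ∀ i ∈ S, x i = true), w x)
        ≤ (1 + δ) ^ S.card * ∏ i ∈ S, marg i := by
  intro S
  induction S using Finset.cons_induction with
  | empty => intro _; simp [hw1]
  | cons a s ha ih =>
    intro hcard
    rw [Finset.card_cons] at hcard
    have hm : s.card < N := by omega
    have h1 : Finset.univ.filter (fun x : ι → Bool => ∀ i ∈ Finset.cons a s ha, x i = true)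
        = Finset.univ.filter (fun x : ι → Bool => x a = true ∧ ∀ i ∈ s, x i = true) := by
      ext x
      simp [Finset.mem_filter, Finset.forall_mem_cons]
    rw [h1, Finset.card_cons, Finset.prod_cons]
    have h2 := hai s hm a ha
    have h3 := ih (by omega)
    have h4 : 0 ≤ (1 + δ) * marg a := mul_nonneg (by linarith) (hmarg0 a)
    refine le_trans h2 ?_
    refine le_trans (mul_le_mul_of_nonneg_left h3 h4) (le_of_eq ?_)
    ring

private lemma aux_split {ι J : Type*} [Fintype ι] [DecidableEq ι] [Fintype J]
    (r m : ℕ) (marg : ι → ℝ) (hmarg0 : ∀ j, 0 ≤ marg j)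
    (e : J → Finset ι) (hdeg : ∀ j, (e j).card ≤ r)
    (μ' E' : ℝ) (hμ' : (∑ j : J, ∏ i ∈ e j, marg i) ≤ μ') (hE0 : 0 ≤ E')
    (hE' : ∀ B : Finset ι, B.Nonempty →
      (∑ j ∈ Finset.univ.filter (fun j => B ⊆ e j), ∏ i ∈ e j \ B, marg i) ≤ E')
    (U : Finset ι) (hU : U.card + r ≤ r * m) :
    (∑ j : J, ∏ i ∈ e j \ U, marg i) ≤ μ' + (((r*m)^r : ℕ) : ℝ) * E' := by
  classical
  set f : J → ℝ := fun j => ∏ i ∈ e j \ U, marg i with hf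
  rw [← Finset.sum_filter_add_sum_filter_not Finset.univ (fun j => (e j ∩ U).Nonempty) f]
  have hB : ∑ j ∈ Finset.univ.filter (fun j => ¬(e j ∩ U).Nonempty), f j ≤ μ' := by
    refine le_trans ?_ hμ'
    have heq : ∀ j ∈ Finset.univ.filter (fun j => ¬(e j ∩ U).Nonempty),
        f j = ∏ i ∈ e j, marg i := by
      intro j hj
      simp only [Finset.mem_filter, Finset.not_nonempty_iff_eq_empty] at hj
      have hdisj : e j \ U = e j := by
        rw [Finset.sdiff_eq_self_iff_disjoint, Finset.disjoint_iff_inter_eq_empty]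
        exact hj.2
      simp only [hf, hdisj]
    rw [Finset.sum_congr rfl heq]
    exact Finset.sum_le_sum_of_subset_of_nonneg (Finset.filter_subset _ _)
      (fun j _ _ => Finset.prod_nonneg (fun i _ => hmarg0 i))
  have hA : ∑ j ∈ Finset.univ.filter (fun j => (e j ∩ U).Nonempty), f j
      ≤ (((r*m)^r : ℕ) : ℝ) * E' := by
    set J1 := Finset.univ.filter (fun j : J => (e j ∩ U).Nonempty) with hJ1
    set T := J1.image (fun j => e j ∩ U) with hT
    have hmap : ∀ j ∈ J1, e j ∩ U ∈ T := fun j hj => Finset.mem_image_of_mem _ hj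
    rw [← Finset.sum_fiberwise_of_maps_to hmap f]
    have hinner : ∀ B ∈ T, (∑ j ∈ J1.filter (fun j => e j ∩ U = B), f j) ≤ E' := by
      intro B hBmem
      obtain ⟨j0, hj0, hj0B⟩ := Finset.mem_image.1 hBmem
      have hBne : B.Nonempty := by
        rw [← hj0B]
        exact (Finset.mem_filter.1 hj0).2
      refine le_trans ?_ (hE' B hBne)
      have hsub : J1.filter (fun j => e j ∩ U = B) ⊆ Finset.univ.filter (fun j => B ⊆ e j) := by
        intro j hj
        simp only [Finset.mem_filter] at hj ⊢
        exact ⟨Finset.mem_univ j, hj.2 ▸ Finset.inter_subset_left⟩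
      refine le_trans (le_of_eq ?_) (Finset.sum_le_sum_of_subset_of_nonneg hsub
        (fun j _ _ => Finset.prod_nonneg (fun i _ => hmarg0 i)))
      apply Finset.sum_congr rfl
      intro j hj
      have hjB : e j ∩ U = B := (Finset.mem_filter.1 hj).2
      simp only [hf]
      congr 1
      rw [← hjB, Finset.sdiff_inter_self_left]
    have hcard : (T.card : ℝ) ≤ (((r*m)^r : ℕ) : ℝ) := by
      by_cases hTe : T = ∅
      · simp [hTe]; positivity
      · obtain ⟨B, hBmem⟩ := Finset.nonempty_iff_ne_empty.2 hTe
        obtain ⟨j0, hj0, hj0B⟩ := Finset.mem_image.1 hBmem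
        have hj0' : (e j0 ∩ U).Nonempty := (Finset.mem_filter.1 hj0).2
        have hr1 : 1 ≤ r := by
          have hne : (e j0).Nonempty :=
            ⟨hj0'.choose, Finset.mem_of_mem_inter_left hj0'.choose_spec⟩
          exact le_trans (Finset.card_pos.2 hne) (hdeg j0)
        have hsub : T ⊆ (Finset.range (r+1)).biUnion (fun k => U.powersetCard k) := by
          intro B hBm
          obtain ⟨j, hj, hjB⟩ := Finset.mem_image.1 hBm
          have h1 : B ⊆ U := hjB ▸ Finset.inter_subset_right
          have h2 : B.card ≤ r :=
            le_trans (Finset.card_le_card (hjB ▸ Finset.inter_subset_left)) (hdeg j)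
          rw [Finset.mem_biUnion]
          exact ⟨B.card, Finset.mem_range.2 (by omega), Finset.mem_powersetCard.2 ⟨h1, rfl⟩⟩
        have h3 : T.card ≤ ∑ k ∈ Finset.range (r+1), (U.powersetCard k).card :=
          le_trans (Finset.card_le_card hsub) Finset.card_biUnion_le
        have h4 : T.card ≤ (U.card + 1)^r := by
          refine le_trans h3 ?_
          simp_rw [Finset.card_powersetCard]
          exact count_le U.card r
        have h5 : (U.card+1)^r ≤ (r*m)^r := Nat.pow_le_pow_left (by omega) r
        exact_mod_cast le_trans h4 h5
    calc ∑ B ∈ T, ∑ j ∈ J1.filter (fun j => e j ∩ U = B), f j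
        ≤ ∑ _B ∈ T, E' := Finset.sum_le_sum hinner
      _ = T.card * E' := by rw [Finset.sum_const, nsmul_eq_mul]
      _ ≤ (((r*m)^r : ℕ) : ℝ) * E' := mul_le_mul_of_nonneg_right hcard hE0
  linarith


private lemma aux_count {ι J : Type*} [Fintype ι] [DecidableEq ι] [Fintype J]
    (r m : ℕ) (marg : ι → ℝ) (hmarg0 : ∀ j, 0 ≤ marg j)
    (e : J → Finset ι) (hdeg : ∀ j, (e j).card ≤ r)
    (μ' E' : ℝ) (hμ0 : 0 ≤ μ') (hμ' : (∑ j : J, ∏ i ∈ e j, marg i) ≤ μ') (hE0 : 0 ≤ E')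
    (hE' : ∀ B : Finset ι, B.Nonempty →
      (∑ j ∈ Finset.univ.filter (fun j => B ⊆ e j), ∏ i ∈ e j \ B, marg i) ≤ E') :
    ∀ (n : ℕ) (U : Finset ι), U.card + r * n ≤ r * m →
      (∑ t : Fin n → J, ∏ i ∈ (Finset.univ.biUnion fun k => e (t k)) \ U, marg i)
        ≤ (μ' + (((r*m)^r : ℕ) : ℝ) * E') ^ n := by
  intro n
  induction n with
  | zero =>
    intro U _
    simp
  | succ n ih =>
    intro U hU
    have hC0 : (0:ℝ) ≤ μ' + (((r*m)^r : ℕ) : ℝ) * E' := by positivity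
    have key := (Equiv.sum_comp (Fin.consEquiv (fun _ : Fin (n+1) => J))
      (fun t : Fin (n+1) → J =>
        ∏ i ∈ (Finset.univ.biUnion fun k => e (t k)) \ U, marg i)).symm
    rw [key, Fintype.sum_prod_type]
    simp_rw [Fin.consEquiv_apply]
    have hsucc : ∀ (j : J) (t : Fin n → J),
        (Finset.univ.biUnion fun k : Fin (n+1) => e ((Fin.cons j t : ∀ _ : Fin (n+1), J) k))
          = e j ∪ (Finset.univ.biUnion fun k : Fin n => e (t k)) := by
      intro j t
      ext i
      simp only [Finset.mem_biUnion, Finset.mem_univ, true_and, Finset.mem_union]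
      rw [Fin.exists_fin_succ]
      simp
    have hdecomp : ∀ (j : J) (t : Fin n → J),
        (∏ i ∈ (Finset.univ.biUnion fun k : Fin (n+1) => e ((Fin.cons j t : ∀ _ : Fin (n+1), J) k)) \ U, marg i)
          = (∏ i ∈ e j \ U, marg i) *
            ∏ i ∈ (Finset.univ.biUnion fun k : Fin n => e (t k)) \ (U ∪ e j), marg i := by
      intro j t
      have hdisj : Disjoint (e j \ U)
          ((Finset.univ.biUnion fun k : Fin n => e (t k)) \ (U ∪ e j)) := by
        rw [Finset.disjoint_left]
        intro i hi1 hi2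
        simp only [Finset.mem_sdiff, Finset.mem_union] at hi1 hi2
        tauto
      rw [hsucc, ← Finset.prod_union hdisj]
      congr 1
      ext i
      simp only [Finset.mem_sdiff, Finset.mem_union]
      tauto
    simp_rw [hdecomp, ← Finset.mul_sum]
    have step1 : ∀ j : J,
        (∏ i ∈ e j \ U, marg i) *
          (∑ t : Fin n → J,
            ∏ i ∈ (Finset.univ.biUnion fun k => e (t k)) \ (U ∪ e j), marg i)
        ≤ (∏ i ∈ e j \ U, marg i) * (μ' + (((r*m)^r : ℕ) : ℝ) * E')^n := by
      intro j
      refine mul_le_mul_of_nonneg_left (ih (U ∪ e j) ?_)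
        (Finset.prod_nonneg fun i _ => hmarg0 i)
      have h1 : (U ∪ e j).card ≤ U.card + r :=
        le_trans (Finset.card_union_le _ _) (Nat.add_le_add_left (hdeg j) _)
      rw [Nat.mul_succ] at hU
      omega
    calc ∑ j : J, (∏ i ∈ e j \ U, marg i) *
          (∑ t : Fin n → J,
            ∏ i ∈ (Finset.univ.biUnion fun k => e (t k)) \ (U ∪ e j), marg i)
        ≤ ∑ j : J, (∏ i ∈ e j \ U, marg i) * (μ' + (((r*m)^r : ℕ) : ℝ) * E')^n :=
          Finset.sum_le_sum (fun j _ => step1 j)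
      _ = (∑ j : J, ∏ i ∈ e j \ U, marg i) * (μ' + (((r*m)^r : ℕ) : ℝ) * E')^n := by
          rw [← Finset.sum_mul]
      _ ≤ (μ' + (((r*m)^r : ℕ) : ℝ) * E') * (μ' + (((r*m)^r : ℕ) : ℝ) * E')^n := by
          refine mul_le_mul_of_nonneg_right ?_ (pow_nonneg hC0 n)
          refine aux_split r m marg hmarg0 e hdeg μ' E' hμ' hE0 hE' U ?_
          rw [Nat.mul_succ] at hU
          omega
      _ = (μ' + (((r*m)^r : ℕ) : ℝ) * E')^(n+1) := by ring

/-- Kim–Vu style concentration (Theorem 18).  `w` is a distribution `P_x` over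
`{0,1}^ι` which is `(δ, r·m)`-almost independent; `wstar` is the fully
independent (product) distribution with the same marginals `marg`;
`P(x) = Σ_j ∏_{i ∈ e j} x_i` is a multilinear polynomial of degree at most `r`;
`μ* = E_{wstar}[P]` and `E*` is the maximal expectation under `wstar` of a
nonempty partial derivative `∂_B P`.  Then
`Pr_{x ← P_x}[P(x) ≥ μ*(1+ε)] ≤ ((1+δ)^r (1 + r^r m^r E*/μ*)/(1+ε))^m`. -/
theorem stmt_18 {ι : Type*} [Fintype ι] [DecidableEq ι]
    (r m : ℕ) (δ ε : ℝ) (hδ : 0 ≤ δ) (hε : 0 < ε)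
    (w : (ι → Bool) → ℝ) (hw0 : ∀ x, 0 ≤ w x) (hw1 : ∑ x, w x = 1)
    (marg : ι → ℝ)
    (hmarg : ∀ j, marg j = ∑ x ∈ Finset.univ.filter (fun x : ι → Bool => x j = true), w x)
    (wstar : (ι → Bool) → ℝ)
    (hwstar : ∀ x, wstar x = ∏ j, (if x j then marg j else 1 - marg j))
    -- `(δ, r·m)`-almost independence of the distribution `w`
    (hai : ∀ M : Finset ι, M.card < r * m → ∀ j ∉ M,
      (∑ x ∈ Finset.univ.filter
          (fun x : ι → Bool => x j = true ∧ ∀ i ∈ M, x i = true), w x)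
        ≤ (1 + δ) * marg j *
          (∑ x ∈ Finset.univ.filter (fun x : ι → Bool => ∀ i ∈ M, x i = true), w x))
    -- the polynomial `P`
    {J : Type*} [Fintype J] (e : J → Finset ι) (hdeg : ∀ j, (e j).card ≤ r)
    (Pval : (ι → Bool) → ℝ)
    (hP : ∀ x, Pval x = ∑ j, ∏ i ∈ e j, (if x i then (1 : ℝ) else 0))
    (μstar Estar : ℝ)
    (hμ : μstar = ∑ x, wstar x * Pval x) (hμpos : 0 < μstar)
    (hE : IsGreatest
      (Set.range (fun B : {B : Finset ι // B.Nonempty} =>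
        ∑ x, wstar x *
          ∑ j ∈ Finset.univ.filter (fun j : J => B.1 ⊆ e j),
            ∏ i ∈ e j \ B.1, (if x i then (1 : ℝ) else 0))) Estar) :
    ∑ x ∈ Finset.univ.filter (fun x : ι → Bool => μstar * (1 + ε) ≤ Pval x), w x
      ≤ ((1 + δ) ^ r * (1 + (r : ℝ) ^ r * (m : ℝ) ^ r * Estar / μstar)
          / (1 + ε)) ^ m := by
  classical
  have hm0 : ∀ j, 0 ≤ marg j := by
    intro j; rw [hmarg]; exact Finset.sum_nonneg (fun x _ => hw0 x)
  -- the value of a "partial derivative" under wstar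
  have hval_eq : ∀ B : Finset ι,
      (∑ x, wstar x * ∑ j ∈ Finset.univ.filter (fun j : J => B ⊆ e j),
          ∏ i ∈ e j \ B, (if x i then (1 : ℝ) else 0))
        = ∑ j ∈ Finset.univ.filter (fun j : J => B ⊆ e j), ∏ i ∈ e j \ B, marg i := by
    intro B
    calc (∑ x, wstar x * ∑ j ∈ Finset.univ.filter (fun j : J => B ⊆ e j),
            ∏ i ∈ e j \ B, (if x i then (1 : ℝ) else 0))
        = ∑ x : ι → Bool, ∑ j ∈ Finset.univ.filter (fun j : J => B ⊆ e j),
            (∏ k, (if x k then marg k else 1 - marg k)) *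
              ∏ i ∈ e j \ B, (if x i then (1 : ℝ) else 0) := by
          refine Finset.sum_congr rfl (fun x _ => ?_)
          rw [hwstar, Finset.mul_sum]
      _ = ∑ j ∈ Finset.univ.filter (fun j : J => B ⊆ e j),
            ∑ x : ι → Bool, (∏ k, (if x k then marg k else 1 - marg k)) *
              ∏ i ∈ e j \ B, (if x i then (1 : ℝ) else 0) := Finset.sum_comm
      _ = ∑ j ∈ Finset.univ.filter (fun j : J => B ⊆ e j), ∏ i ∈ e j \ B, marg i :=
          Finset.sum_congr rfl (fun j _ => factor_lemma marg (e j \ B))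
  have hEub : ∀ B : Finset ι, B.Nonempty →
      (∑ j ∈ Finset.univ.filter (fun j : J => B ⊆ e j), ∏ i ∈ e j \ B, marg i) ≤ Estar := by
    intro B hB
    rw [← hval_eq B]
    exact hE.2 ⟨⟨B, hB⟩, rfl⟩
  have hE0 : 0 ≤ Estar := by
    obtain ⟨⟨B, hB⟩, hval⟩ := hE.1
    dsimp only at hval
    rw [← hval, hval_eq]
    exact Finset.sum_nonneg (fun j _ => Finset.prod_nonneg (fun i _ => hm0 i))
  have hmu_eq : μstar = ∑ j : J, ∏ i ∈ e j, marg i := by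
    rw [hμ]
    calc (∑ x, wstar x * Pval x)
        = ∑ x : ι → Bool, ∑ j : J, (∏ k, (if x k then marg k else 1 - marg k)) *
            ∏ i ∈ e j, (if x i then (1 : ℝ) else 0) := by
          refine Finset.sum_congr rfl (fun x _ => ?_)
          rw [hP, hwstar, Finset.mul_sum]
      _ = ∑ j : J, ∑ x : ι → Bool, (∏ k, (if x k then marg k else 1 - marg k)) *
            ∏ i ∈ e j, (if x i then (1 : ℝ) else 0) := Finset.sum_comm
      _ = ∑ j : J, ∏ i ∈ e j, marg i :=
          Finset.sum_congr rfl (fun j _ => factor_lemma marg (e j))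
  have hPnn : ∀ x, 0 ≤ Pval x := by
    intro x
    rw [hP]
    refine Finset.sum_nonneg (fun j _ => Finset.prod_nonneg (fun i _ => ?_))
    split <;> norm_num
  -- expansion of the m-th power
  have hexp : ∑ x, w x * Pval x ^ m
      = ∑ t : Fin m → J, ∑ x ∈ Finset.univ.filter
          (fun x : ι → Bool => ∀ i ∈ (Finset.univ.biUnion fun k => e (t k)), x i = true), w x := by
    calc ∑ x, w x * Pval x ^ m
        = ∑ x : ι → Bool, ∑ t : Fin m → J,
            w x * (if ∀ i ∈ (Finset.univ.biUnion fun k => e (t k)), x i = true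
              then (1:ℝ) else 0) := by
          refine Finset.sum_congr rfl (fun x _ => ?_)
          rw [hP, Fintype.sum_pow, Finset.mul_sum]
          refine Finset.sum_congr rfl (fun t _ => ?_)
          congr 1
          calc ∏ k : Fin m, ∏ i ∈ e (t k), (if x i then (1:ℝ) else 0)
              = (if ∀ k : Fin m, ∀ i ∈ e (t k), x i = true then (1:ℝ) else 0) := by
                simp_rw [Finset.prod_boole]
                by_cases h : ∀ k : Fin m, ∀ i ∈ e (t k), x i = true
                · rw [if_pos h]
                  exact Finset.prod_eq_one (fun k _ => if_pos (h k))
                · rw [if_neg h]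
                  push_neg at h
                  obtain ⟨k, hk⟩ := h
                  refine Finset.prod_eq_zero (Finset.mem_univ k) ?_
                  rw [if_neg]
                  push_neg
                  exact hk
            _ = (if ∀ i ∈ (Finset.univ.biUnion fun k => e (t k)), x i = true
                  then (1:ℝ) else 0) := by
                refine if_congr ?_ rfl rfl
                simp [Finset.mem_biUnion]
                tauto
      _ = ∑ t : Fin m → J, ∑ x : ι → Bool,
            w x * (if ∀ i ∈ (Finset.univ.biUnion fun k => e (t k)), x i = true
              then (1:ℝ) else 0) := Finset.sum_comm
      _ = ∑ t : Fin m → J, ∑ x ∈ Finset.univ.filter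
            (fun x : ι → Bool => ∀ i ∈ (Finset.univ.biUnion fun k => e (t k)), x i = true),
            w x := by
          refine Finset.sum_congr rfl (fun t _ => ?_)
          rw [Finset.sum_filter]
          simp_rw [mul_ite, mul_one, mul_zero]
  -- bound for each tuple
  have hcardS : ∀ t : Fin m → J, (Finset.univ.biUnion fun k => e (t k)).card ≤ r * m := by
    intro t
    refine le_trans Finset.card_biUnion_le ?_
    calc ∑ k : Fin m, (e (t k)).card ≤ ∑ _k : Fin m, r :=
          Finset.sum_le_sum (fun k _ => hdeg _)
      _ = m * r := by simp [Finset.sum_const]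
      _ = r * m := Nat.mul_comm _ _
  have hAI := aux_ai (r*m) δ hδ w hw1 marg hm0 hai
  have hone : (1:ℝ) ≤ 1 + δ := by linarith
  have hterm : ∀ t : Fin m → J,
      (∑ x ∈ Finset.univ.filter
          (fun x : ι → Bool => ∀ i ∈ (Finset.univ.biUnion fun k => e (t k)), x i = true), w x)
        ≤ (1 + δ) ^ (r*m) * ∏ i ∈ (Finset.univ.biUnion fun k => e (t k)), marg i := by
    intro t
    refine le_trans (hAI _ (hcardS t)) ?_
    refine mul_le_mul_of_nonneg_right (pow_le_pow_right₀ hone (hcardS t))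
      (Finset.prod_nonneg (fun i _ => hm0 i))
  -- apply the counting lemma
  have hcount := aux_count r m marg hm0 e hdeg μstar Estar hμpos.le (le_of_eq hmu_eq.symm)
    hE0 hEub m ∅ (by simp)
  simp_rw [Finset.sdiff_empty] at hcount
  have hsum1 : ∑ x, w x * Pval x ^ m
      ≤ (1 + δ) ^ (r*m) * (μstar + (((r*m)^r : ℕ) : ℝ) * Estar) ^ m := by
    rw [hexp]
    calc (∑ t : Fin m → J, ∑ x ∈ Finset.univ.filter
            (fun x : ι → Bool => ∀ i ∈ (Finset.univ.biUnion fun k => e (t k)), x i = true), w x)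
        ≤ ∑ t : Fin m → J,
            (1 + δ) ^ (r*m) * ∏ i ∈ (Finset.univ.biUnion fun k => e (t k)), marg i :=
          Finset.sum_le_sum (fun t _ => hterm t)
      _ = (1 + δ) ^ (r*m) *
          ∑ t : Fin m → J, ∏ i ∈ (Finset.univ.biUnion fun k => e (t k)), marg i := by
          rw [Finset.mul_sum]
      _ ≤ (1 + δ) ^ (r*m) * (μstar + (((r*m)^r : ℕ) : ℝ) * Estar) ^ m := by
          refine mul_le_mul_of_nonneg_left hcount (pow_nonneg (by linarith) _)
  -- Markov
  have hK0 : (0:ℝ) < μstar * (1 + ε) := mul_pos hμpos (by linarith)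
  have hmarkov : (∑ x ∈ Finset.univ.filter
        (fun x : ι → Bool => μstar * (1 + ε) ≤ Pval x), w x) * (μstar * (1+ε))^m
      ≤ ∑ x, w x * Pval x ^ m := by
    rw [Finset.sum_mul]
    calc ∑ x ∈ Finset.univ.filter (fun x : ι → Bool => μstar * (1 + ε) ≤ Pval x),
          w x * (μstar * (1+ε))^m
        ≤ ∑ x ∈ Finset.univ.filter (fun x : ι → Bool => μstar * (1 + ε) ≤ Pval x),
          w x * Pval x ^ m := by
          refine Finset.sum_le_sum (fun x hx => ?_)
          exact mul_le_mul_of_nonneg_left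
            (pow_le_pow_left₀ hK0.le ((Finset.mem_filter.1 hx).2) m) (hw0 x)
      _ ≤ ∑ x, w x * Pval x ^ m :=
          Finset.sum_le_sum_of_subset_of_nonneg (Finset.filter_subset _ _)
            (fun x _ _ => mul_nonneg (hw0 x) (pow_nonneg (hPnn x) m))
  have hRHS : ((1 + δ) ^ r * (1 + (r : ℝ) ^ r * (m : ℝ) ^ r * Estar / μstar) / (1 + ε)) ^ m
      = ((1 + δ) ^ (r*m) * (μstar + (((r*m)^r : ℕ) : ℝ) * Estar) ^ m)
          / (μstar * (1+ε))^m := by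
    have hc : (((r*m)^r : ℕ) : ℝ) = (r : ℝ) ^ r * (m : ℝ) ^ r := by
      push_cast
      ring
    have hX : 1 + (r : ℝ) ^ r * (m : ℝ) ^ r * Estar / μstar
        = (μstar + (((r*m)^r : ℕ) : ℝ) * Estar) / μstar := by
      rw [hc]
      field_simp
    rw [hX]
    rw [show (1 + δ) ^ r * ((μstar + (((r*m)^r : ℕ) : ℝ) * Estar) / μstar) / (1 + ε)
        = ((1 + δ) ^ r * (μstar + (((r*m)^r : ℕ) : ℝ) * Estar)) / (μstar * (1 + ε)) by
      field_simp]
    rw [div_pow, mul_pow, ← pow_mul]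
  rw [hRHS]
  exact (le_div_iff₀ (pow_pos hK0 m)).2 (le_trans hmarkov hsum1)
end
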